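/- arXiv:2406.01531 — 4 statements merged into one kernel-verified Lean document; each statement's English description precedes it below -/
import Mathlib

section
/- For all x,y ∈ ℝ³ with x×y ≠ 0, the isotropy type set of G³(x,y) is the disjoint union M_{G³(x,y)} = D₁(x,y) ∪ D₂(x,y) ∪ D₃(x,y) ∪ D₄(x,y), where D₁(x,y) = {(λy+x, βy+x, 0, 0) : λ,β ∈ ℝ, λ ≠ β}, D₂(x,y) = {(λy+x, βy+x, 0, δy) : λ,β,δ ∈ ℝ, δ ≠ 0}, D₃(x,y) = {(λy+x, βy+x, γy, 0) : λ,β,γ ∈ ℝ, γ ≠ 0}, and D₄(x,y) = {(λy+x, βy+x, γy, δy) : λ,β,γ,δ ∈ ℝ, γ ≠ 0, δ ≠ 0}. -/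
open Matrix

/-- Vectors in ℝ³. -/
abbrev V3 : Type := Fin 3 → ℝ

/-- The two-body phase space M = ℝ³ × ℝ³ × ℝ³ × ℝ³, points (q¹, q², p¹, p²). -/
abbrev M2B : Type := V3 × V3 × V3 × V3

/-- A 3×3 real matrix is special orthogonal. -/
def SO3 (A : Matrix (Fin 3) (Fin 3) ℝ) : Prop := Aᵀ * A = 1 ∧ A.det = 1

/-- The action of (A, a) ∈ SE(3) on the phase space:
(A,a)·(q¹,q²,p¹,p²) = (Aq¹+a, Aq²+a, Ap¹, Ap²). -/
def act (A : Matrix (Fin 3) (Fin 3) ℝ) (a : V3) (m : M2B) : M2B :=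
  (A *ᵥ m.1 + a, A *ᵥ m.2.1 + a, A *ᵥ m.2.2.1, A *ᵥ m.2.2.2)

/-- The isotropy subgroup SE(3)_{(q,p)} of a point of M, as a set of pairs (A,a)
with A special orthogonal. -/
def isotropy (m : M2B) : Set (Matrix (Fin 3) (Fin 3) ℝ × V3) :=
  {g | SO3 g.1 ∧ act g.1 g.2 m = m}

/-- The momentum map J(q¹,q²,p¹,p²) = (q¹×p¹ + q²×p², p¹+p²). -/
def Jmom (m : M2B) : V3 × V3 :=
  (m.1 ⨯₃ m.2.2.1 + m.2.1 ⨯₃ m.2.2.2, m.2.2.1 + m.2.2.2)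

/-- G¹(x) = {(A,a) ∈ SE(3) : a = x − Ax}. -/
def G1 (x : V3) : Set (Matrix (Fin 3) (Fin 3) ℝ × V3) :=
  {g | SO3 g.1 ∧ g.2 = x - g.1 *ᵥ x}

/-- G²(y) = {(A,0) ∈ SE(3) : Ay = y}. -/
def G2 (y : V3) : Set (Matrix (Fin 3) (Fin 3) ℝ × V3) :=
  {g | SO3 g.1 ∧ g.1 *ᵥ y = y ∧ g.2 = 0}

/-- G³(x,y) = {(A,a) ∈ SE(3) : Ay = y and a = x − Ax}. -/
def G3 (x y : V3) : Set (Matrix (Fin 3) (Fin 3) ℝ × V3) :=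
  {g | SO3 g.1 ∧ g.1 *ᵥ y = y ∧ g.2 = x - g.1 *ᵥ x}

/-- G⁴ = {(I, 0)}, the trivial subgroup. -/
def G4 : Set (Matrix (Fin 3) (Fin 3) ℝ × V3) := {((1 : Matrix (Fin 3) (Fin 3) ℝ), (0 : V3))}

def D1 (x y : V3) : Set M2B := {m | ∃ l b : ℝ, l ≠ b ∧ m = (l • y + x, b • y + x, 0, 0)}
def D2 (x y : V3) : Set M2B := {m | ∃ l b d : ℝ, d ≠ 0 ∧ m = (l • y + x, b • y + x, 0, d • y)}
def D3 (x y : V3) : Set M2B := {m | ∃ l b c : ℝ, c ≠ 0 ∧ m = (l • y + x, b • y + x, c • y, 0)}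
def D4 (x y : V3) : Set M2B :=
  {m | ∃ l b c d : ℝ, c ≠ 0 ∧ d ≠ 0 ∧ m = (l • y + x, b • y + x, c • y, d • y)}

/- ### Auxiliary machinery -/

lemma vec3_ext' {u v : V3} (h0 : u 0 = v 0) (h1 : u 1 = v 1) (h2 : u 2 = v 2) : u = v := by
  funext i; fin_cases i <;> assumption

lemma mat3_ext' {A B : Matrix (Fin 3) (Fin 3) ℝ}
    (h : ∀ i j : Fin 3, A i j = B i j) : A = B := by
  ext i j; exact h i j

/-- Rotation by π about the axis `y` (for `y ≠ 0`). -/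
noncomputable def refl3 (y : V3) : Matrix (Fin 3) (Fin 3) ℝ :=
  fun i j => 2 * y i * y j / (y 0 ^ 2 + y 1 ^ 2 + y 2 ^ 2) - if i = j then 1 else 0

lemma nsq_ne (y : V3) (hy : y ≠ 0) : y 0 ^ 2 + y 1 ^ 2 + y 2 ^ 2 ≠ 0 := by
  intro h
  apply hy
  have h0 : y 0 = 0 := by nlinarith [sq_nonneg (y 0), sq_nonneg (y 1), sq_nonneg (y 2)]
  have h1 : y 1 = 0 := by nlinarith [sq_nonneg (y 0), sq_nonneg (y 1), sq_nonneg (y 2)]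
  have h2 : y 2 = 0 := by nlinarith [sq_nonneg (y 0), sq_nonneg (y 1), sq_nonneg (y 2)]
  exact vec3_ext' h0 h1 h2

set_option maxHeartbeats 1000000 in
lemma refl3_orth (y : V3) (hn : y 0 ^ 2 + y 1 ^ 2 + y 2 ^ 2 ≠ 0) : (refl3 y)ᵀ * refl3 y = 1 := by
  have key : ∀ i j : Fin 3, ((refl3 y)ᵀ * refl3 y) i j =
      refl3 y 0 i * refl3 y 0 j + refl3 y 1 i * refl3 y 1 j + refl3 y 2 i * refl3 y 2 j := by
    intro i j
    rw [Matrix.mul_apply, Fin.sum_univ_three]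
    simp [Matrix.transpose_apply]
  apply mat3_ext'
  intro i j
  rw [key]
  fin_cases i <;> fin_cases j <;>
    · simp [refl3, Matrix.one_apply]
      field_simp
      ring

set_option maxHeartbeats 1000000 in
lemma refl3_det (y : V3) (hn : y 0 ^ 2 + y 1 ^ 2 + y 2 ^ 2 ≠ 0) : (refl3 y).det = 1 := by
  rw [Matrix.det_fin_three]
  simp [refl3]
  field_simp
  ring

lemma refl3_so3 (y : V3) (hn : y 0 ^ 2 + y 1 ^ 2 + y 2 ^ 2 ≠ 0) : SO3 (refl3 y) :=
  ⟨refl3_orth y hn, refl3_det y hn⟩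

set_option maxHeartbeats 1000000 in
lemma refl3_fix (y : V3) (hn : y 0 ^ 2 + y 1 ^ 2 + y 2 ^ 2 ≠ 0) : refl3 y *ᵥ y = y := by
  have key : ∀ i : Fin 3, (refl3 y *ᵥ y) i = y i := by
    intro i
    simp only [Matrix.mulVec, dotProduct, Fin.sum_univ_three, refl3]
    fin_cases i <;>
      · simp
        field_simp
        ring
  exact vec3_ext' (key 0) (key 1) (key 2)

set_option maxHeartbeats 1000000 in
lemma refl3_fixed (y v : V3) (hn : y 0 ^ 2 + y 1 ^ 2 + y 2 ^ 2 ≠ 0)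
    (h : refl3 y *ᵥ v = v) : ∃ c : ℝ, v = c • y := by
  refine ⟨(y 0 * v 0 + y 1 * v 1 + y 2 * v 2) / (y 0 ^ 2 + y 1 ^ 2 + y 2 ^ 2), ?_⟩
  have key : ∀ i : Fin 3, v i =
      (y 0 * v 0 + y 1 * v 1 + y 2 * v 2) / (y 0 ^ 2 + y 1 ^ 2 + y 2 ^ 2) * y i := by
    intro i
    have hi := congrFun h i
    simp only [Matrix.mulVec, dotProduct, Fin.sum_univ_three, refl3] at hi
    fin_cases i <;>
      · simp at hi ⊢
        field_simp at hi ⊢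
        linarith
  refine vec3_ext' ?_ ?_ ?_ <;> simp [Pi.smul_apply] <;> [exact key 0; exact key 1; exact key 2]

lemma cross_ne_y (x y : V3) (hxy : x ⨯₃ y ≠ 0) : y ≠ 0 := by
  intro h; exact hxy (by rw [h]; exact map_zero (crossProduct x))

lemma cross_ne_x (x y : V3) (hxy : x ⨯₃ y ≠ 0) : x ≠ 0 := by
  intro h
  apply hxy
  rw [h]
  show crossProduct 0 y = 0
  rw [map_zero crossProduct]
  rfl

lemma cross_smul_self (x : V3) (c : ℝ) : x ⨯₃ (c • x) = 0 := by
  show crossProduct x (c • x) = 0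
  rw [_root_.map_smul, cross_self, smul_zero]

/-- The key equality: for points of the canonical form, the isotropy group is G³. -/
lemma iso_eq_G3 (x y : V3) (hxy : x ⨯₃ y ≠ 0) (l b c d : ℝ)
    (hcond : c ≠ 0 ∨ d ≠ 0 ∨ l ≠ b) :
    isotropy (l • y + x, b • y + x, c • y, d • y) = G3 x y := by
  have hy : y ≠ 0 := cross_ne_y x y hxy
  ext g
  constructor
  · rintro ⟨hSO, hact⟩
    simp only [act, Prod.mk.injEq] at hact
    obtain ⟨h1, h2, h3, h4⟩ := hact
    have hAy : g.1 *ᵥ y = y := by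
      rcases hcond with hc | hd | hlb
      · have : c • (g.1 *ᵥ y) = c • y := by rwa [← Matrix.mulVec_smul]
        exact smul_right_injective V3 hc this
      · have : d • (g.1 *ᵥ y) = d • y := by rwa [← Matrix.mulVec_smul]
        exact smul_right_injective V3 hd this
      · have hsub : g.1 *ᵥ (l • y + x) - g.1 *ᵥ (b • y + x) = l • y - b • y := by
          have := congrArg₂ (· - ·) h1 h2
          simpa using this
        rw [Matrix.mulVec_add, Matrix.mulVec_add, Matrix.mulVec_smul, Matrix.mulVec_smul]
          at hsub
        have h5 : (l - b) • (g.1 *ᵥ y) = (l - b) • y := by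
          rw [sub_smul, sub_smul]
          abel_nf
          abel_nf at hsub
          linear_combination (norm := module) hsub
        exact smul_right_injective V3 (sub_ne_zero.mpr hlb) h5
    refine ⟨hSO, hAy, ?_⟩
    have := h1
    rw [Matrix.mulVec_add, Matrix.mulVec_smul, hAy] at this
    have : l • y + g.1 *ᵥ x + g.2 = l • y + x := this
    linear_combination (norm := module) this
  · rintro ⟨hSO, hAy, ha⟩
    refine ⟨hSO, ?_⟩
    simp only [act, Prod.mk.injEq]
    refine ⟨?_, ?_, ?_, ?_⟩
    · rw [Matrix.mulVec_add, Matrix.mulVec_smul, hAy, ha]; module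
    · rw [Matrix.mulVec_add, Matrix.mulVec_smul, hAy, ha]; module
    · rw [Matrix.mulVec_smul, hAy]
    · rw [Matrix.mulVec_smul, hAy]

/-- The isotropy type set of G³(x,y) is the disjoint union D₁ ∪ D₂ ∪ D₃ ∪ D₄. -/
theorem stmt3 (x y : V3) (hxy : x ⨯₃ y ≠ 0) :
    {m : M2B | isotropy m = G3 x y} = D1 x y ∪ D2 x y ∪ D3 x y ∪ D4 x y ∧
    Disjoint (D1 x y) (D2 x y) ∧ Disjoint (D1 x y) (D3 x y) ∧ Disjoint (D1 x y) (D4 x y) ∧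
    Disjoint (D2 x y) (D3 x y) ∧ Disjoint (D2 x y) (D4 x y) ∧ Disjoint (D3 x y) (D4 x y) := by
  have hy : y ≠ 0 := cross_ne_y x y hxy
  have hx : x ≠ 0 := cross_ne_x x y hxy
  have hn := nsq_ne y hy
  have hnx := nsq_ne x hx
  refine ⟨?_, ?_, ?_, ?_, ?_, ?_, ?_⟩
  · ext m
    simp only [Set.mem_setOf_eq, Set.mem_union]
    constructor
    · intro hm
      obtain ⟨q1, q2, p1, p2⟩ := m
      -- the element (refl3 y, x - refl3 y x) lies in G3 = isotropy m
      have hmem : (refl3 y, x - refl3 y *ᵥ x) ∈ G3 x y :=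
        ⟨refl3_so3 y hn, refl3_fix y hn, rfl⟩
      rw [← hm] at hmem
      obtain ⟨-, hact⟩ := hmem
      simp only [act, Prod.mk.injEq] at hact
      obtain ⟨h1, h2, h3, h4⟩ := hact
      have hq1 : refl3 y *ᵥ (q1 - x) = q1 - x := by
        rw [Matrix.mulVec_sub]
        linear_combination (norm := module) h1
      have hq2 : refl3 y *ᵥ (q2 - x) = q2 - x := by
        rw [Matrix.mulVec_sub]
        linear_combination (norm := module) h2
      obtain ⟨l, hl⟩ := refl3_fixed y (q1 - x) hn hq1
      obtain ⟨b, hb⟩ := refl3_fixed y (q2 - x) hn hq2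
      obtain ⟨c, hc⟩ := refl3_fixed y p1 hn h3
      obtain ⟨d, hd⟩ := refl3_fixed y p2 hn h4
      have hq1' : q1 = l • y + x := by rw [← hl]; abel
      have hq2' : q2 = b • y + x := by rw [← hb]; abel
      -- the degenerate case cannot occur
      have hdeg : ¬ (c = 0 ∧ d = 0 ∧ l = b) := by
        rintro ⟨rfl, rfl, rfl⟩
        have hmem2 : (refl3 x, q1 - refl3 x *ᵥ q1) ∈ isotropy (q1, q2, p1, p2) := by
          refine ⟨refl3_so3 x hnx, ?_⟩
          simp only [act, Prod.mk.injEq]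
          have hq : q2 = q1 := by rw [hq1', hq2']
          have hp1 : p1 = 0 := by rw [hc, zero_smul]
          have hp2 : p2 = 0 := by rw [hd, zero_smul]
          refine ⟨by abel, by rw [hq]; abel, by rw [hp1, Matrix.mulVec_zero],
            by rw [hp2, Matrix.mulVec_zero]⟩
        rw [hm] at hmem2
        obtain ⟨-, hfix, -⟩ := hmem2
        obtain ⟨e, he⟩ := refl3_fixed x y hnx hfix
        exact hxy (he ▸ cross_smul_self x e)
      by_cases hc0 : c = 0 <;> by_cases hd0 : d = 0
      · left; left; left
        exact ⟨l, b, fun h => hdeg ⟨hc0, hd0, h⟩, by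
          rw [hq1', hq2', Prod.mk.injEq, Prod.mk.injEq, Prod.mk.injEq]
          exact ⟨rfl, rfl, by rw [hc, hc0, zero_smul], by rw [hd, hd0, zero_smul]⟩⟩
      · left; left; right
        exact ⟨l, b, d, hd0, by
          rw [hq1', hq2', Prod.mk.injEq, Prod.mk.injEq, Prod.mk.injEq]
          exact ⟨rfl, rfl, by rw [hc, hc0, zero_smul], hd⟩⟩
      · left; right
        exact ⟨l, b, c, hc0, by
          rw [hq1', hq2', Prod.mk.injEq, Prod.mk.injEq, Prod.mk.injEq]
          exact ⟨rfl, rfl, hc, by rw [hd, hd0, zero_smul]⟩⟩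
      · right
        exact ⟨l, b, c, d, hc0, hd0, by
          rw [hq1', hq2', Prod.mk.injEq, Prod.mk.injEq, Prod.mk.injEq]
          exact ⟨rfl, rfl, hc, hd⟩⟩
    · rintro (((⟨l, b, hlb, rfl⟩ | ⟨l, b, d, hd, rfl⟩) | ⟨l, b, c, hc, rfl⟩) |
        ⟨l, b, c, d, hc, hd, rfl⟩)
      · have h0 : (0 : V3) = (0 : ℝ) • y := by rw [zero_smul]
        rw [h0]
        exact iso_eq_G3 x y hxy l b 0 0 (Or.inr (Or.inr hlb))
      · have h0 : (0 : V3) = (0 : ℝ) • y := by rw [zero_smul]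
        conv_lhs => rw [h0]
        exact iso_eq_G3 x y hxy l b 0 d (Or.inr (Or.inl hd))
      · have h0 : (0 : V3) = (0 : ℝ) • y := by rw [zero_smul]
        conv_lhs => rw [h0]
        exact iso_eq_G3 x y hxy l b c 0 (Or.inl hc)
      · exact iso_eq_G3 x y hxy l b c d (Or.inl hc)
  all_goals
    rw [Set.disjoint_left]
    rintro m ⟨l, b, h⟩ ⟨l', b', h'⟩
  · obtain ⟨hlb, e1⟩ := h
    obtain ⟨d', hd', e2⟩ := h'
    have := congrArg (fun m : M2B => m.2.2.2) (e1.symm.trans e2)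
    simp only at this
    exact hd' ((smul_eq_zero.mp this.symm).resolve_right hy)
  · obtain ⟨hlb, e1⟩ := h
    obtain ⟨c', hc', e2⟩ := h'
    have := congrArg (fun m : M2B => m.2.2.1) (e1.symm.trans e2)
    simp only at this
    exact hc' ((smul_eq_zero.mp this.symm).resolve_right hy)
  · obtain ⟨hlb, e1⟩ := h
    obtain ⟨c', d', hc', hd', e2⟩ := h'
    have := congrArg (fun m : M2B => m.2.2.1) (e1.symm.trans e2)
    simp only at this
    exact hc' ((smul_eq_zero.mp this.symm).resolve_right hy)
  · obtain ⟨d, hd, e1⟩ := h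
    obtain ⟨c', hc', e2⟩ := h'
    have := congrArg (fun m : M2B => m.2.2.1) (e1.symm.trans e2)
    simp only at this
    exact hc' ((smul_eq_zero.mp this.symm).resolve_right hy)
  · obtain ⟨d, hd, e1⟩ := h
    obtain ⟨c', d', hc', hd', e2⟩ := h'
    have := congrArg (fun m : M2B => m.2.2.1) (e1.symm.trans e2)
    simp only at this
    exact hc' ((smul_eq_zero.mp this.symm).resolve_right hy)
  · obtain ⟨c, hc, e1⟩ := h
    obtain ⟨c', d', hc', hd', e2⟩ := h'
    have := congrArg (fun m : M2B => m.2.2.2) (e1.symm.trans e2)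
    simp only at this
    exact hd' ((smul_eq_zero.mp this.symm).resolve_right hy)
end

section
/- The parametrization of the class G² is bijective modulo scale: for y₁, y₂ ∈ ℝ³ with y₁ ≠ 0 and y₂ ≠ 0, one has G²(y₁) = G²(y₂) (as subgroups of SE(3)) if and only if there exists λ ∈ ℝ, λ ≠ 0, such that y₂ = λ y₁. -/
open Matrix

/-- Rotation by π about the axis `v` (for nonzero `v`). -/
noncomputable def rotPi (v : V3) : Matrix (Fin 3) (Fin 3) ℝ :=
  !![2*v 0*v 0/(v 0*v 0+v 1*v 1+v 2*v 2) - 1, 2*v 0*v 1/(v 0*v 0+v 1*v 1+v 2*v 2),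
       2*v 0*v 2/(v 0*v 0+v 1*v 1+v 2*v 2);
     2*v 1*v 0/(v 0*v 0+v 1*v 1+v 2*v 2), 2*v 1*v 1/(v 0*v 0+v 1*v 1+v 2*v 2) - 1,
       2*v 1*v 2/(v 0*v 0+v 1*v 1+v 2*v 2);
     2*v 2*v 0/(v 0*v 0+v 1*v 1+v 2*v 2), 2*v 2*v 1/(v 0*v 0+v 1*v 1+v 2*v 2),
       2*v 2*v 2/(v 0*v 0+v 1*v 1+v 2*v 2) - 1]

lemma sumsq_ne (v : V3) (hv : v ≠ 0) : v 0 * v 0 + v 1 * v 1 + v 2 * v 2 ≠ 0 := by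
  intro h0
  apply hv
  have h00 : v 0 = 0 := by nlinarith [sq_nonneg (v 0), sq_nonneg (v 1), sq_nonneg (v 2)]
  have h01 : v 1 = 0 := by nlinarith [sq_nonneg (v 0), sq_nonneg (v 1), sq_nonneg (v 2)]
  have h02 : v 2 = 0 := by nlinarith [sq_nonneg (v 0), sq_nonneg (v 1), sq_nonneg (v 2)]
  funext i
  fin_cases i <;> simp [h00, h01, h02]

set_option maxHeartbeats 1000000 in
lemma rotPi_SO3 (v : V3) (hv : v ≠ 0) : SO3 (rotPi v) := by
  have hs := sumsq_ne v hv
  have hs2 : v 0 ^ 2 + v 1 ^ 2 + v 2 ^ 2 ≠ 0 := by simpa [sq] using hs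
  have hsym : (rotPi v)ᵀ = rotPi v := by
    ext i j
    fin_cases i <;> fin_cases j <;> simp [rotPi] <;> ring
  constructor
  · rw [hsym, Matrix.one_fin_three]
    ext i j
    fin_cases i <;> fin_cases j <;>
      · simp [rotPi, Matrix.mul_apply, Fin.sum_univ_three, Matrix.vecHead, Matrix.vecTail]
        try field_simp
        try ring
  · rw [Matrix.det_fin_three]
    simp [rotPi]
    field_simp
    ring

set_option maxHeartbeats 1000000 in
lemma rotPi_fix (v : V3) (hv : v ≠ 0) : rotPi v *ᵥ v = v := by
  have hs := sumsq_ne v hv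
  have hs2 : v 0 ^ 2 + v 1 ^ 2 + v 2 ^ 2 ≠ 0 := by simpa [sq] using hs
  have c0 : (rotPi v *ᵥ v) 0 = v 0 := by
    simp [rotPi, Matrix.mulVec, dotProduct, Fin.sum_univ_three]
    field_simp; ring
  have c1 : (rotPi v *ᵥ v) 1 = v 1 := by
    simp [rotPi, Matrix.mulVec, dotProduct, Fin.sum_univ_three]
    field_simp; ring
  have c2 : (rotPi v *ᵥ v) 2 = v 2 := by
    simp [rotPi, Matrix.mulVec, dotProduct, Fin.sum_univ_three]
    field_simp; ring
  funext i
  fin_cases i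
  exacts [c0, c1, c2]

set_option maxHeartbeats 1000000 in
lemma rotPi_eig (v w : V3) (hv : v ≠ 0) (h : rotPi v *ᵥ w = w) :
    ∃ l : ℝ, w = l • v := by
  have hs := sumsq_ne v hv
  have hs2 : v 0 ^ 2 + v 1 ^ 2 + v 2 ^ 2 ≠ 0 := by simpa [sq] using hs
  set L : ℝ := (v 0 * w 0 + v 1 * w 1 + v 2 * w 2) / (v 0 * v 0 + v 1 * v 1 + v 2 * v 2) with hL
  refine ⟨L, ?_⟩
  have hi0 := congrFun h 0
  have hi1 := congrFun h 1
  have hi2 := congrFun h 2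
  simp [rotPi, Matrix.mulVec, dotProduct, Fin.sum_univ_three] at hi0 hi1 hi2
  have c0 : w 0 = L * v 0 := by
    rw [hL]; field_simp at hi0 ⊢
    linear_combination -hi0 / 2
  have c1 : w 1 = L * v 1 := by
    rw [hL]; field_simp at hi1 ⊢
    linear_combination -hi1 / 2
  have c2 : w 2 = L * v 2 := by
    rw [hL]; field_simp at hi2 ⊢
    linear_combination -hi2 / 2
  funext i
  fin_cases i
  exacts [c0, c1, c2]

/-- The parametrization of the class G² is bijective modulo scale. -/
theorem stmt5 (y1 y2 : V3) (h1 : y1 ≠ 0) (h2 : y2 ≠ 0) :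
    G2 y1 = G2 y2 ↔ ∃ l : ℝ, l ≠ 0 ∧ y2 = l • y1 := by
  constructor
  · intro hEq
    have hmem : (rotPi y1, (0:V3)) ∈ G2 y1 := ⟨rotPi_SO3 y1 h1, rotPi_fix y1 h1, rfl⟩
    rw [hEq] at hmem
    obtain ⟨-, hfix2, -⟩ := hmem
    obtain ⟨l, hl⟩ := rotPi_eig y1 y2 h1 hfix2
    refine ⟨l, ?_, hl⟩
    rintro rfl
    simp at hl
    exact h2 hl
  · rintro ⟨l, hl, rfl⟩
    ext g
    constructor
    · rintro ⟨hso, hy, h0⟩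
      exact ⟨hso, by rw [Matrix.mulVec_smul, hy], h0⟩
    · rintro ⟨hso, hy, h0⟩
      refine ⟨hso, ?_, h0⟩
      rw [Matrix.mulVec_smul] at hy
      exact smul_right_injective V3 hl hy
end

section
/- (Orbits of the optimal isotropy group in Case 6) Let α₀ ∈ ℝ³, α₀ ≠ 0, and let G = {(A,a) ∈ SE(3) : Aα₀ = α₀}. For every (q¹,q²,p¹,p²) ∈ J⁻¹(α₀,0) one has p¹ ≠ 0, and two points (q¹,q²,p¹,−p¹) and (q̃¹,q̃²,p̃¹,−p̃¹) of J⁻¹(α₀,0) lie in the same G-orbit if and only if |p¹| = |p̃¹| and ⟨q¹−q², p¹⟩/|p¹|² = ⟨q̃¹−q̃², p̃¹⟩/|p̃¹|². -/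
open Matrix

-- Auxiliary lemmas
section Aux

lemma crossd1 (u v : V3) : (u ⨯₃ v) ⬝ᵥ u = 0 := by
  simp [cross_apply, dotProduct, Fin.sum_univ_three]; ring
lemma crossd2 (u v : V3) : (u ⨯₃ v) ⬝ᵥ v = 0 := by
  simp [cross_apply, dotProduct, Fin.sum_univ_three]; ring
lemma cross_self_dot (u v : V3) :
    (u ⨯₃ v) ⬝ᵥ (u ⨯₃ v) = (u ⬝ᵥ u) * (v ⬝ᵥ v) - (u ⬝ᵥ v)^2 := by
  simp [cross_apply, dotProduct, Fin.sum_univ_three]; ring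
lemma cross_triple (u v : V3) :
    u ⬝ᵥ ((v ⨯₃ u) ⨯₃ v) = (u ⬝ᵥ u) * (v ⬝ᵥ v) - (u ⬝ᵥ v)^2 := by
  simp [cross_apply, dotProduct, Fin.sum_univ_three]; ring
lemma cross_sub_eq (q1 q2 p : V3) : q1 ⨯₃ p + q2 ⨯₃ (-p) = (q1 - q2) ⨯₃ p := by
  ext i; fin_cases i <;> simp [cross_apply] <;> ring
lemma cross_smul_smul (c d : ℝ) (u v : V3) : (c • u) ⨯₃ (d • v) = (c * d) • (u ⨯₃ v) := by
  ext i; fin_cases i <;> simp [cross_apply] <;> ring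
lemma key_dot (a p r : V3) (h : r ⨯₃ p = a) : (a ⨯₃ p) ⬝ᵥ r = -(a ⬝ᵥ a) := by
  subst h; simp [cross_apply, dotProduct, Fin.sum_univ_three]; ring
lemma cross_zero_right (u : V3) : u ⨯₃ (0 : V3) = 0 := by
  ext i; fin_cases i <;> simp [cross_apply]

def frameM (u v w : V3) : Matrix (Fin 3) (Fin 3) ℝ := fun i j => ![u, v, w] j i

lemma frameT_mulVec (u v w x : V3) :
    (frameM u v w)ᵀ *ᵥ x = ![u ⬝ᵥ x, v ⬝ᵥ x, w ⬝ᵥ x] := by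
  ext i; fin_cases i <;> simp [frameM, mulVec, dotProduct, Fin.sum_univ_three]

lemma frame_mulVec (u v w x : V3) :
    frameM u v w *ᵥ x = x 0 • u + x 1 • v + x 2 • w := by
  ext i; simp [frameM, mulVec, dotProduct, Fin.sum_univ_three]; ring

lemma frameT_mul (u v w u' v' w' : V3) :
    (frameM u v w)ᵀ * frameM u' v' w' =
      Matrix.of ![![u ⬝ᵥ u', u ⬝ᵥ v', u ⬝ᵥ w'],
                  ![v ⬝ᵥ u', v ⬝ᵥ v', v ⬝ᵥ w'],
                  ![w ⬝ᵥ u', w ⬝ᵥ v', w ⬝ᵥ w']] := by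
  ext i j; fin_cases i <;> fin_cases j <;>
    simp [frameM, Matrix.mul_apply, dotProduct, Fin.sum_univ_three]

lemma frame_det (u v w : V3) : (frameM u v w).det = u ⬝ᵥ (v ⨯₃ w) := by
  rw [← Matrix.det_transpose]
  simp [Matrix.det_fin_three, frameM, Matrix.transpose_apply, cross_apply, dotProduct,
    Fin.sum_univ_three]
  ring

lemma orth_dot {A : Matrix (Fin 3) (Fin 3) ℝ} (hA : Aᵀ * A = 1) (u v : V3) :
    (A *ᵥ u) ⬝ᵥ (A *ᵥ v) = u ⬝ᵥ v := by
  rw [Matrix.dotProduct_mulVec, ← Matrix.mulVec_transpose, Matrix.mulVec_mulVec, hA,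
    Matrix.one_mulVec]

end Aux

/-- Orbits of the optimal isotropy group in Case 6: on J⁻¹(α₀,0) one has p¹ ≠ 0,
and two points lie in the same orbit of G = {(A,a) ∈ SE(3) : Aα₀ = α₀} iff they
have the same |p¹| and the same ⟨q¹−q²,p¹⟩/|p¹|². -/
theorem stmt13 (a0 : V3) (ha : a0 ≠ 0) :
    (∀ m : M2B, Jmom m = (a0, 0) → m.2.2.1 ≠ 0) ∧
    ∀ q1 q2 p1 q1' q2' p1' : V3,
      Jmom (q1, q2, p1, -p1) = (a0, 0) → Jmom (q1', q2', p1', -p1') = (a0, 0) →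
      ((∃ (A : Matrix (Fin 3) (Fin 3) ℝ) (a : V3), SO3 A ∧ A *ᵥ a0 = a0 ∧
          act A a (q1, q2, p1, -p1) = (q1', q2', p1', -p1')) ↔
        (Real.sqrt (p1 ⬝ᵥ p1) = Real.sqrt (p1' ⬝ᵥ p1') ∧
         (q1 - q2) ⬝ᵥ p1 / (p1 ⬝ᵥ p1) = (q1' - q2') ⬝ᵥ p1' / (p1' ⬝ᵥ p1'))) := by
  have hp1ne : ∀ q1 q2 p1 : V3, (q1 - q2) ⨯₃ p1 = a0 → p1 ≠ 0 := by
    intro q1 q2 p1 h hp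
    apply ha
    rw [← h, hp, cross_zero_right]
  constructor
  · rintro ⟨q1, q2, p1, p2⟩ hm
    simp only [Jmom, Prod.mk.injEq] at hm
    obtain ⟨h1, h2⟩ := hm
    have hp2 : p2 = -p1 := eq_neg_of_add_eq_zero_right h2
    subst hp2
    have hr : (q1 - q2) ⨯₃ p1 = a0 := by rw [← cross_sub_eq]; exact h1
    exact hp1ne _ _ _ hr
  · intro q1 q2 p1 q1' q2' p1' hJ hJ'
    simp only [Jmom, Prod.mk.injEq] at hJ hJ'
    have hr : (q1 - q2) ⨯₃ p1 = a0 := by rw [← cross_sub_eq]; exact hJ.1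
    have hr' : (q1' - q2') ⨯₃ p1' = a0 := by rw [← cross_sub_eq]; exact hJ'.1
    have hp : p1 ≠ 0 := hp1ne _ _ _ hr
    have hp' : p1' ≠ 0 := hp1ne _ _ _ hr'
    have hppnn : (0:ℝ) ≤ p1 ⬝ᵥ p1 := Finset.sum_nonneg fun i _ => mul_self_nonneg _
    have hppnn' : (0:ℝ) ≤ p1' ⬝ᵥ p1' := Finset.sum_nonneg fun i _ => mul_self_nonneg _
    have hpp : (0:ℝ) < p1 ⬝ᵥ p1 :=
      lt_of_le_of_ne hppnn (fun h => hp (dotProduct_self_eq_zero.mp h.symm))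
    have hpp' : (0:ℝ) < p1' ⬝ᵥ p1' :=
      lt_of_le_of_ne hppnn' (fun h => hp' (dotProduct_self_eq_zero.mp h.symm))
    have ha0nn : (0:ℝ) ≤ a0 ⬝ᵥ a0 := Finset.sum_nonneg fun i _ => mul_self_nonneg _
    have ha0pos : (0:ℝ) < a0 ⬝ᵥ a0 :=
      lt_of_le_of_ne ha0nn (fun h => ha (dotProduct_self_eq_zero.mp h.symm))
    constructor
    · rintro ⟨A, a, hSO, hAa0, hact⟩
      simp only [act, Prod.mk.injEq] at hact
      obtain ⟨h1, h2, h3, h4⟩ := hact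
      have hdp : p1' ⬝ᵥ p1' = p1 ⬝ᵥ p1 := by rw [← h3, orth_dot hSO.1]
      have hAr : A *ᵥ (q1 - q2) = q1' - q2' := by
        rw [Matrix.mulVec_sub, ← h1, ← h2]; abel
      have hdr : (q1' - q2') ⬝ᵥ p1' = (q1 - q2) ⬝ᵥ p1 := by
        rw [← hAr, ← h3, orth_dot hSO.1]
      exact ⟨by rw [hdp], by rw [hdp, hdr]⟩
    · rintro ⟨hnorm, hdiv⟩
      have hppeq : p1 ⬝ᵥ p1 = p1' ⬝ᵥ p1' :=
        (Real.sqrt_inj hppnn hppnn').mp hnorm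
      have hdot : (q1 - q2) ⬝ᵥ p1 = (q1' - q2') ⬝ᵥ p1' := by
        rw [div_eq_div_iff hpp.ne' hpp'.ne'] at hdiv
        rw [hppeq] at hdiv
        exact mul_right_cancel₀ hpp'.ne' hdiv
      set na := Real.sqrt (a0 ⬝ᵥ a0) with hna
      set np := Real.sqrt (p1 ⬝ᵥ p1) with hnp
      have hna0 : na ≠ 0 := (Real.sqrt_pos.mpr ha0pos).ne'
      have hnp0 : np ≠ 0 := (Real.sqrt_pos.mpr hpp).ne'
      have hnasq : na * na = a0 ⬝ᵥ a0 := Real.mul_self_sqrt ha0nn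
      have hnpsq : np * np = p1 ⬝ᵥ p1 := Real.mul_self_sqrt hppnn
      have hnpsq' : np * np = p1' ⬝ᵥ p1' := by rw [hnpsq, hppeq]
      set n := na⁻¹ • a0 with hn
      set e := np⁻¹ • p1 with he
      set e' := np⁻¹ • p1' with he'
      set f := n ⨯₃ e with hf
      set f' := n ⨯₃ e' with hf'
      have ha0p : a0 ⬝ᵥ p1 = 0 := by rw [← hr]; exact crossd2 _ _
      have ha0p' : a0 ⬝ᵥ p1' = 0 := by rw [← hr']; exact crossd2 _ _
      have ha0r : a0 ⬝ᵥ (q1 - q2) = 0 := by rw [← hr]; exact crossd1 _ _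
      have ha0r' : a0 ⬝ᵥ (q1' - q2') = 0 := by rw [← hr']; exact crossd1 _ _
      have hee : e ⬝ᵥ e = 1 := by
        rw [he, smul_dotProduct, dotProduct_smul, smul_eq_mul, smul_eq_mul, ← hnpsq]
        field_simp
      have hee' : e' ⬝ᵥ e' = 1 := by
        rw [he', smul_dotProduct, dotProduct_smul, smul_eq_mul, smul_eq_mul, ← hnpsq']
        field_simp
      have hnn : n ⬝ᵥ n = 1 := by
        rw [hn, smul_dotProduct, dotProduct_smul, smul_eq_mul, smul_eq_mul, ← hnasq]
        field_simp
      have hen : e ⬝ᵥ n = 0 := by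
        rw [he, hn, smul_dotProduct, dotProduct_smul, smul_eq_mul, smul_eq_mul,
          dotProduct_comm, ha0p, mul_zero, mul_zero]
      have hen' : e' ⬝ᵥ n = 0 := by
        rw [he', hn, smul_dotProduct, dotProduct_smul, smul_eq_mul, smul_eq_mul,
          dotProduct_comm, ha0p', mul_zero, mul_zero]
      have hne : n ⬝ᵥ e = 0 := by rw [dotProduct_comm]; exact hen
      have hne' : n ⬝ᵥ e' = 0 := by rw [dotProduct_comm]; exact hen'
      have hef : e ⬝ᵥ f = 0 := by rw [dotProduct_comm, hf]; exact crossd2 _ _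
      have hef' : e' ⬝ᵥ f' = 0 := by rw [dotProduct_comm, hf']; exact crossd2 _ _
      have hfe : f ⬝ᵥ e = 0 := by rw [dotProduct_comm]; exact hef
      have hfe' : f' ⬝ᵥ e' = 0 := by rw [dotProduct_comm]; exact hef'
      have hfn : f ⬝ᵥ n = 0 := by rw [hf]; exact crossd1 _ _
      have hfn' : f' ⬝ᵥ n = 0 := by rw [hf']; exact crossd1 _ _
      have hnf : n ⬝ᵥ f = 0 := by rw [dotProduct_comm]; exact hfn
      have hnf' : n ⬝ᵥ f' = 0 := by rw [dotProduct_comm]; exact hfn'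
      have hff : f ⬝ᵥ f = 1 := by
        rw [hf, cross_self_dot, hnn, hee, hne]; ring
      have hff' : f' ⬝ᵥ f' = 1 := by
        rw [hf', cross_self_dot, hnn, hee', hne']; ring
      have hB : (frameM e f n)ᵀ * frameM e f n = 1 := by
        rw [frameT_mul]
        ext i j
        fin_cases i <;> fin_cases j <;>
          simp [hee, hef, hen, hfe, hff, hfn, hne, hnf, hnn, Matrix.one_apply,
            Matrix.vecHead, Matrix.vecTail]
      have hB' : (frameM e' f' n)ᵀ * frameM e' f' n = 1 := by
        rw [frameT_mul]
        ext i j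
        fin_cases i <;> fin_cases j <;>
          simp [hee', hef', hen', hfe', hff', hfn', hne', hnf', hnn, Matrix.one_apply,
            Matrix.vecHead, Matrix.vecTail]
      have hBc : frameM e f n * (frameM e f n)ᵀ = 1 := mul_eq_one_comm.mp hB
      have hBc' : frameM e' f' n * (frameM e' f' n)ᵀ = 1 := mul_eq_one_comm.mp hB'
      have hdetB : (frameM e f n).det = 1 := by
        rw [frame_det, hf, cross_triple, hee, hnn, hen]; ring
      have hdetB' : (frameM e' f' n).det = 1 := by
        rw [frame_det, hf', cross_triple, hee', hnn, hen']; ring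
      set A := frameM e' f' n * (frameM e f n)ᵀ with hA
      have hATA : Aᵀ * A = 1 := by
        rw [hA, Matrix.transpose_mul, Matrix.transpose_transpose, Matrix.mul_assoc,
          ← Matrix.mul_assoc (frameM e' f' n)ᵀ, hB', Matrix.one_mul, hBc]
      have hdetA : A.det = 1 := by
        rw [hA, Matrix.det_mul, Matrix.det_transpose, hdetB, hdetB', mul_one]
      have hAn : A *ᵥ n = n := by
        rw [hA, ← Matrix.mulVec_mulVec, frameT_mulVec, hen, hfn, hnn, frame_mulVec]
        simp
      have hAe : A *ᵥ e = e' := by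
        rw [hA, ← Matrix.mulVec_mulVec, frameT_mulVec, hee, hfe, hne, frame_mulVec]
        simp
      have hAa0 : A *ᵥ a0 = a0 := by
        have h0 : a0 = na • n := by rw [hn, smul_smul, mul_inv_cancel₀ hna0, one_smul]
        rw [h0, Matrix.mulVec_smul, hAn]
      have hAp1 : A *ᵥ p1 = p1' := by
        have h0 : p1 = np • e := by rw [he, smul_smul, mul_inv_cancel₀ hnp0, one_smul]
        have h0' : p1' = np • e' := by rw [he', smul_smul, mul_inv_cancel₀ hnp0, one_smul]
        rw [h0, Matrix.mulVec_smul, hAe, ← h0']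
      have her : e ⬝ᵥ (q1 - q2) = e' ⬝ᵥ (q1' - q2') := by
        rw [he, he', smul_dotProduct, smul_dotProduct, smul_eq_mul, smul_eq_mul,
          dotProduct_comm p1, dotProduct_comm p1', hdot]
      have hnr : n ⬝ᵥ (q1 - q2) = 0 := by
        rw [hn, smul_dotProduct, smul_eq_mul, ha0r, mul_zero]
      have hnr' : n ⬝ᵥ (q1' - q2') = 0 := by
        rw [hn, smul_dotProduct, smul_eq_mul, ha0r', mul_zero]
      have hfr : f ⬝ᵥ (q1 - q2) = f' ⬝ᵥ (q1' - q2') := by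
        rw [hf, hf', hn, he, he', cross_smul_smul, cross_smul_smul,
          smul_dotProduct, smul_dotProduct, smul_eq_mul, smul_eq_mul,
          key_dot a0 p1 _ hr, key_dot a0 p1' _ hr']
      have hAr : A *ᵥ (q1 - q2) = q1' - q2' := by
        have hcol : (frameM e f n)ᵀ *ᵥ (q1 - q2) = (frameM e' f' n)ᵀ *ᵥ (q1' - q2') := by
          rw [frameT_mulVec, frameT_mulVec, her, hfr, hnr, hnr']
        rw [hA, ← Matrix.mulVec_mulVec, hcol, Matrix.mulVec_mulVec, hBc', Matrix.one_mulVec]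
      refine ⟨A, q1' - A *ᵥ q1, ⟨hATA, hdetA⟩, hAa0, ?_⟩
      simp only [act, Prod.mk.injEq]
      refine ⟨by abel, ?_, hAp1, by rw [Matrix.mulVec_neg, hAp1]⟩
      have hsub : A *ᵥ q1 - A *ᵥ q2 = q1' - q2' := by
        rw [← Matrix.mulVec_sub]; exact hAr
      funext i
      have h0 := congrFun hsub i
      simp only [Pi.sub_apply, Pi.add_apply] at h0 ⊢
      linarith
end

section
/- (Coplanarity lemma of Case 7) Let u₀ ∈ ℝ³, u₀ ≠ 0. If (q¹,q²,p¹,p²) ∈ M satisfies q¹×p¹ + q²×p² = 0 and p¹ + p² = u₀, then there exists a 2-dimensional linear subspace Π of ℝ³ containing u₀ such that q¹, q², p¹, p² all belong to Π. -/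
open Matrix

-- auxiliary lemmas
def dotL (n : V3) : V3 →ₗ[ℝ] ℝ where
  toFun x := n ⬝ᵥ x
  map_add' x y := dotProduct_add n x y
  map_smul' c x := by simp [dotProduct_smul]

lemma collin {v w : V3} (h : v ⨯₃ w = 0) : (∃ c : ℝ, c • v = w) ∨ (∃ c : ℝ, c • w = v) := by
  by_cases hv : v = 0
  · exact Or.inr ⟨0, by simp [hv]⟩
  · left
    have hli : ¬ LinearIndependent ℝ ![v, w] := by
      rw [← crossProduct_ne_zero_iff_linearIndependent]
      simpa using h
    rw [LinearIndependent.pair_iff' hv] at hli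
    push_neg at hli
    exact hli

lemma exists_perp (z : V3) : ∃ n : V3, n ≠ 0 ∧ n ⬝ᵥ z = 0 := by
  by_cases hz : z = 0
  · refine ⟨![1,0,0], ?_, by simp [hz]⟩
    intro h
    have := congrFun h 0
    simp at this
  · have he : ∃ e : V3, z ⨯₃ e ≠ 0 := by
      by_contra hc
      push_neg at hc
      have h0 := collin (hc ![1,0,0])
      have h1 := collin (hc ![0,1,0])
      rcases h0 with ⟨c, hc0⟩ | ⟨c, hc0⟩ <;> rcases h1 with ⟨d, hd0⟩ | ⟨d, hd0⟩
      · have a0 := congrFun hc0 0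
        have b0 := congrFun hd0 0
        have b1 := congrFun hd0 1
        simp at a0 b0 b1
        have : d = 0 := by
          rcases b0 with h | h
          · exact h
          · exfalso; rw [h, mul_zero] at a0; exact one_ne_zero a0.symm
        rw [this, zero_mul] at b1
        exact one_ne_zero b1.symm
      · have a0 := congrFun hc0 0
        have b0 := congrFun hd0 0
        simp at a0 b0
        rw [← b0, mul_zero] at a0
        exact one_ne_zero a0.symm
      · have a1 := congrFun hc0 1
        have b1 := congrFun hd0 1
        simp at a1 b1
        rw [← a1, mul_zero] at b1
        exact one_ne_zero b1.symm
      · apply hz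
        funext i
        have a := congrFun hc0 i
        have b := congrFun hd0 i
        fin_cases i <;> simp at a b ⊢ <;> [exact b.symm; exact a.symm; exact a.symm]
    obtain ⟨e, he⟩ := he
    refine ⟨z ⨯₃ e, he, ?_⟩
    rw [dotProduct_comm]
    exact dot_self_cross z e

lemma ker_finrank {n : V3} (hn : n ≠ 0) : Module.finrank ℝ (LinearMap.ker (dotL n)) = 2 := by
  have hr : LinearMap.range (dotL n) = ⊤ := by
    rw [LinearMap.range_eq_top]
    intro x
    refine ⟨(x / (n ⬝ᵥ n)) • n, ?_⟩
    have hnn : n ⬝ᵥ n ≠ 0 := fun h => hn (dotProduct_self_eq_zero.mp h)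
    simp only [dotL, LinearMap.coe_mk, AddHom.coe_mk, dotProduct_smul, smul_eq_mul]
    exact div_mul_cancel₀ x hnn
  have h3 := LinearMap.finrank_range_add_finrank_ker (dotL n)
  rw [hr] at h3
  simp [finrank_top, Module.finrank_pi] at h3
  omega


/-- Coplanarity lemma of Case 7: if q¹×p¹ + q²×p² = 0 and p¹+p² = u₀ ≠ 0 then
q¹, q², p¹, p² lie in a common 2-dimensional subspace containing u₀. -/
theorem stmt14 (u0 : V3) (hu : u0 ≠ 0) (q1 q2 p1 p2 : V3)
    (h1 : q1 ⨯₃ p1 + q2 ⨯₃ p2 = 0) (h2 : p1 + p2 = u0) :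
    ∃ P : Submodule ℝ V3, Module.finrank ℝ P = 2 ∧
      u0 ∈ P ∧ q1 ∈ P ∧ q2 ∈ P ∧ p1 ∈ P ∧ p2 ∈ P := by
  obtain ⟨n, hn, hq1, hq2, hp1, hp2⟩ :
      ∃ n : V3, n ≠ 0 ∧ n ⬝ᵥ q1 = 0 ∧ n ⬝ᵥ q2 = 0 ∧ n ⬝ᵥ p1 = 0 ∧ n ⬝ᵥ p2 = 0 := by
    by_cases hw : q1 ⨯₃ p1 = 0
    · have hw2 : q2 ⨯₃ p2 = 0 := by rwa [hw, zero_add] at h1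
      -- pairs collinear: get spanning vectors
      obtain ⟨z1, ⟨a, ha⟩, ⟨b, hb⟩⟩ : ∃ z1 : V3, (∃ a : ℝ, a • z1 = q1) ∧ (∃ b : ℝ, b • z1 = p1) := by
        rcases collin hw with ⟨c, hc⟩ | ⟨c, hc⟩
        · exact ⟨q1, ⟨1, one_smul _ _⟩, ⟨c, hc⟩⟩
        · exact ⟨p1, ⟨c, hc⟩, ⟨1, one_smul _ _⟩⟩
      obtain ⟨z2, ⟨a2, ha2⟩, ⟨b2, hb2⟩⟩ : ∃ z2 : V3, (∃ a : ℝ, a • z2 = q2) ∧ (∃ b : ℝ, b • z2 = p2) := by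
        rcases collin hw2 with ⟨c, hc⟩ | ⟨c, hc⟩
        · exact ⟨q2, ⟨1, one_smul _ _⟩, ⟨c, hc⟩⟩
        · exact ⟨p2, ⟨c, hc⟩, ⟨1, one_smul _ _⟩⟩
      by_cases hz : z1 ⨯₃ z2 = 0
      · -- all in a single line
        obtain ⟨z, ⟨c1, hc1⟩, ⟨c2, hc2⟩⟩ : ∃ z : V3, (∃ c : ℝ, c • z = z1) ∧ (∃ c : ℝ, c • z = z2) := by
          rcases collin hz with ⟨c, hc⟩ | ⟨c, hc⟩
          · exact ⟨z1, ⟨1, one_smul _ _⟩, ⟨c, hc⟩⟩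
          · exact ⟨z2, ⟨c, hc⟩, ⟨1, one_smul _ _⟩⟩
        obtain ⟨m, hm, hmz⟩ := exists_perp z
        refine ⟨m, hm, ?_, ?_, ?_, ?_⟩ <;>
          [rw [← ha, ← hc1]; rw [← ha2, ← hc2]; rw [← hb, ← hc1]; rw [← hb2, ← hc2]] <;>
          simp [dotProduct_smul, hmz]
      · refine ⟨z1 ⨯₃ z2, hz, ?_, ?_, ?_, ?_⟩
        · rw [← ha, dotProduct_smul, dotProduct_comm, dot_self_cross, smul_zero]
        · rw [← ha2, dotProduct_smul, dotProduct_comm, dot_cross_self, smul_zero]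
        · rw [← hb, dotProduct_smul, dotProduct_comm, dot_self_cross, smul_zero]
        · rw [← hb2, dotProduct_smul, dotProduct_comm, dot_cross_self, smul_zero]
    · refine ⟨q1 ⨯₃ p1, hw, ?_, ?_, ?_, ?_⟩
      · rw [dotProduct_comm]; exact dot_self_cross q1 p1
      · have : q1 ⨯₃ p1 = -(q2 ⨯₃ p2) := by linear_combination h1
        rw [this, neg_dotProduct, dotProduct_comm, dot_self_cross, neg_zero]
      · rw [dotProduct_comm]; exact dot_cross_self q1 p1
      · have : q1 ⨯₃ p1 = -(q2 ⨯₃ p2) := by linear_combination h1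
        rw [this, neg_dotProduct, dotProduct_comm, dot_cross_self, neg_zero]
  refine ⟨LinearMap.ker (dotL n), ker_finrank hn, ?_, ?_, ?_, ?_, ?_⟩ <;>
    simp only [LinearMap.mem_ker] <;>
    show n ⬝ᵥ _ = 0
  · rw [← h2, dotProduct_add, hp1, hp2, add_zero]
  all_goals assumption
end
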